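/- Let c₀>0, α∈[0,1], β=√(1−α²), and let f:ℝ→ℂ be a solution of the profile ODE. Then (i) the quantity E(s) = (1/2)(e^{αs²/2}|f'(s)|² + (c₀²/4)|f(s)|²) is constant in s; call its value E₀. Moreover (ii) for all s∈ℝ: |f(s)| ≤ √(8E₀)/c₀, |f'(s)| ≤ √(2E₀)·e^{−αs²/4}, |z(s)| ≤ 8E₀/c₀², and |h(s)|+|y(s)| ≤ (8E₀/c₀)·e^{−αs²/4}, where z=|f|², y=Re(f̄·f'), h=Im(f̄·f'). -/

import Mathlib

open Real Filter MeasureTheory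

/-- The profile ODE `f'' + (s/2)(α+iβ) f' + (c₀²/4) e^{-αs²/2} f = 0`, with
`β = √(1-α²)`, encoded for a pair `(f, f')`. -/
def ProfileODE (c₀ α : ℝ) (f f' : ℝ → ℂ) : Prop :=
  ∀ s : ℝ,
    HasDerivAt f (f' s) s ∧
    HasDerivAt f'
      (-(((s : ℂ) / 2) * ((α : ℂ) + (Real.sqrt (1 - α ^ 2) : ℂ) * Complex.I) * f' s
        + ((c₀ ^ 2 / 4 : ℝ) : ℂ) * ((Real.exp (-α * s ^ 2 / 2) : ℝ) : ℂ) * f s)) s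

private lemma energy_deriv (c₀ α : ℝ) (f f' : ℝ → ℂ) (h : ProfileODE c₀ α f f') :
    ∀ s : ℝ, HasDerivAt (fun t => (1/2) * (Real.exp (α * t ^ 2 / 2) * Complex.normSq (f' t)
      + (c₀ ^ 2 / 4) * Complex.normSq (f t))) 0 s := by
  intro s
  obtain ⟨hf1, hf2⟩ := h s
  set F : ℂ := -(((s : ℂ) / 2) * ((α : ℂ) + (Real.sqrt (1 - α ^ 2) : ℂ) * Complex.I) * f' s
          + ((c₀ ^ 2 / 4 : ℝ) : ℂ) * ((Real.exp (-α * s ^ 2 / 2) : ℝ) : ℂ) * f s) with hF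
  have hre1 : HasDerivAt (fun t => (f t).re) ((f' s).re) s :=
    Complex.reCLM.hasFDerivAt.comp_hasDerivAt s hf1
  have him1 : HasDerivAt (fun t => (f t).im) ((f' s).im) s :=
    Complex.imCLM.hasFDerivAt.comp_hasDerivAt s hf1
  have hre2 : HasDerivAt (fun t => (f' t).re) (F.re) s :=
    Complex.reCLM.hasFDerivAt.comp_hasDerivAt s hf2
  have him2 : HasDerivAt (fun t => (f' t).im) (F.im) s :=
    Complex.imCLM.hasFDerivAt.comp_hasDerivAt s hf2
  have hN1 : HasDerivAt (fun t => Complex.normSq (f' t))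
      (F.re * (f' s).re + (f' s).re * F.re + (F.im * (f' s).im + (f' s).im * F.im)) s := by
    simp only [Complex.normSq_apply]; exact ((hre2.mul hre2).add (him2.mul him2))
  have hN2 : HasDerivAt (fun t => Complex.normSq (f t))
      ((f' s).re * (f s).re + (f s).re * (f' s).re + ((f' s).im * (f s).im + (f s).im * (f' s).im)) s := by
    simp only [Complex.normSq_apply]; exact ((hre1.mul hre1).add (him1.mul him1))
  have hq : HasDerivAt (fun t : ℝ => α * t ^ 2 / 2) (α * s) s := by
    have := ((hasDerivAt_pow 2 s).const_mul α).div_const 2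
    refine this.congr_deriv ?_
    push_cast; ring
  have hExp : HasDerivAt (fun t : ℝ => Real.exp (α * t ^ 2 / 2))
      (Real.exp (α * s ^ 2 / 2) * (α * s)) s := hq.exp
  have hEd := (((hExp.mul hN1).add (hN2.const_mul (c₀ ^ 2 / 4))).const_mul (1/2 : ℝ))
  refine hEd.congr_deriv ?_
  symm
  have hexp : Real.exp (α * s ^ 2 / 2) * Real.exp (-α * s ^ 2 / 2) = 1 := by
    rw [← Real.exp_add, show α * s ^ 2 / 2 + -α * s ^ 2 / 2 = 0 by ring, Real.exp_zero]
  have hs2 : ((s : ℂ) / 2) = (((s / 2 : ℝ)) : ℂ) := by push_cast; ring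
  rw [hs2] at hF
  have hFre : F.re = -(s / 2 * (α * (f' s).re - Real.sqrt (1 - α ^ 2) * (f' s).im)
      + c₀ ^ 2 / 4 * Real.exp (-α * s ^ 2 / 2) * (f s).re) := by
    simp only [hF, Complex.neg_re, Complex.neg_im, Complex.add_re, Complex.add_im,
      Complex.mul_re, Complex.mul_im, Complex.ofReal_re, Complex.ofReal_im,
      Complex.I_re, Complex.I_im]
    ring
  have hFim : F.im = -(s / 2 * (α * (f' s).im + Real.sqrt (1 - α ^ 2) * (f' s).re)
      + c₀ ^ 2 / 4 * Real.exp (-α * s ^ 2 / 2) * (f s).im) := by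
    simp only [hF, Complex.neg_re, Complex.neg_im, Complex.add_re, Complex.add_im,
      Complex.mul_re, Complex.mul_im, Complex.ofReal_re, Complex.ofReal_im,
      Complex.I_re, Complex.I_im]
    ring
  rw [hFre, hFim]
  simp only [Complex.normSq_apply]
  linear_combination (c₀ ^ 2 / 4 * ((f s).re * (f' s).re + (f s).im * (f' s).im)) * hexp

/-- Conservation of energy for the profile ODE, and the
resulting uniform bounds on `f`, `f'`, `z = |f|²`, `y = Re(f̄ f')`,
`h = Im(f̄ f')`. -/
theorem profileODE_energy_bounds (c₀ α : ℝ) (hc₀ : 0 < c₀)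
    (hα : α ∈ Set.Icc (0 : ℝ) 1)
    (f f' : ℝ → ℂ) (h : ProfileODE c₀ α f f') :
    ∃ E₀ : ℝ,
      (∀ s : ℝ,
        (1 / 2) * (Real.exp (α * s ^ 2 / 2) * ‖f' s‖ ^ 2
          + (c₀ ^ 2 / 4) * ‖f s‖ ^ 2) = E₀) ∧
      ∀ s : ℝ,
        ‖f s‖ ≤ Real.sqrt (8 * E₀) / c₀ ∧
        ‖f' s‖ ≤ Real.sqrt (2 * E₀) * Real.exp (-α * s ^ 2 / 4) ∧
        |‖f s‖ ^ 2| ≤ 8 * E₀ / c₀ ^ 2 ∧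
        |((starRingEnd ℂ) (f s) * f' s).im| + |((starRingEnd ℂ) (f s) * f' s).re|
          ≤ (8 * E₀ / c₀) * Real.exp (-α * s ^ 2 / 4) := by
  set E : ℝ → ℝ := fun t => (1/2) * (Real.exp (α * t ^ 2 / 2) * Complex.normSq (f' t)
      + (c₀ ^ 2 / 4) * Complex.normSq (f t)) with hEdef
  have hEd := energy_deriv c₀ α f f' h
  have hconst : ∀ s : ℝ, E s = E 0 := fun s =>
    is_const_of_deriv_eq_zero (fun t => (hEd t).differentiableAt)
      (fun t => (hEd t).deriv) s 0
  set E₀ := E 0 with hE0def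
  have hE0 : 0 ≤ E₀ := by
    have h1 := Complex.normSq_nonneg (f 0)
    have h2 := Complex.normSq_nonneg (f' 0)
    have h3 := Real.exp_pos (α * (0:ℝ) ^ 2 / 2)
    simp only [hE0def, hEdef]
    nlinarith
  refine ⟨E₀, ?_, ?_⟩
  · intro s
    rw [Complex.sq_norm, Complex.sq_norm]
    exact hconst s
  · intro s
    have hEs := hconst s
    have hn1 := Complex.normSq_nonneg (f s)
    have hn2 := Complex.normSq_nonneg (f' s)
    have hep := Real.exp_pos (α * s ^ 2 / 2)
    have hexp : Real.exp (α * s ^ 2 / 2) * Real.exp (-α * s ^ 2 / 2) = 1 := by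
      rw [← Real.exp_add, show α * s ^ 2 / 2 + -α * s ^ 2 / 2 = 0 by ring, Real.exp_zero]
    have hem := Real.exp_pos (-α * s ^ 2 / 2)
    have he4 := Real.exp_pos (-α * s ^ 2 / 4)
    have he42 : Real.exp (-α * s ^ 2 / 4) * Real.exp (-α * s ^ 2 / 4)
        = Real.exp (-α * s ^ 2 / 2) := by
      rw [← Real.exp_add]; ring_nf
    have h1 : Real.exp (α * s ^ 2 / 2) * Complex.normSq (f' s) ≤ 2 * E₀ := by
      simp only [hEdef] at hEs; nlinarith
    have h2 : (c₀ ^ 2 / 4) * Complex.normSq (f s) ≤ 2 * E₀ := by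
      simp only [hEdef] at hEs; nlinarith
    -- normSq bounds
    have hz : Complex.normSq (f s) ≤ 8 * E₀ / c₀ ^ 2 := by
      rw [le_div_iff₀ (by positivity)]; nlinarith
    have hd : Complex.normSq (f' s) ≤ 2 * E₀ * Real.exp (-α * s ^ 2 / 2) := by
      nlinarith [mul_le_mul_of_nonneg_right h1 hem.le]
    have hb1 : ‖f s‖ ≤ Real.sqrt (8 * E₀) / c₀ := by
      have hsq : ‖f s‖ ^ 2 ≤ (Real.sqrt (8 * E₀) / c₀) ^ 2 := by
        rw [div_pow, Real.sq_sqrt (by positivity), Complex.sq_norm]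
        rw [le_div_iff₀ (by positivity)]
        nlinarith
      have := Real.sqrt_le_sqrt hsq
      rwa [Real.sqrt_sq (norm_nonneg _), Real.sqrt_sq (by positivity)] at this
    have hb2 : ‖f' s‖ ≤ Real.sqrt (2 * E₀) * Real.exp (-α * s ^ 2 / 4) := by
      have hsq : ‖f' s‖ ^ 2 ≤ (Real.sqrt (2 * E₀) * Real.exp (-α * s ^ 2 / 4)) ^ 2 := by
        rw [mul_pow, Real.sq_sqrt (by positivity), Complex.sq_norm, sq, he42]
        exact hd
      have := Real.sqrt_le_sqrt hsq
      rwa [Real.sqrt_sq (norm_nonneg _), Real.sqrt_sq (by positivity)] at this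
    refine ⟨hb1, hb2, ?_, ?_⟩
    · rw [abs_of_nonneg (by positivity), Complex.sq_norm]
      exact hz
    · have him := Complex.abs_im_le_norm ((starRingEnd ℂ) (f s) * f' s)
      have hre := Complex.abs_re_le_norm ((starRingEnd ℂ) (f s) * f' s)
      have habs : ‖(starRingEnd ℂ) (f s) * f' s‖
          = ‖f s‖ * ‖f' s‖ := by
        rw [norm_mul, Complex.norm_conj]
      have hsqm : Real.sqrt (8 * E₀) * Real.sqrt (2 * E₀) = 4 * E₀ := by
        rw [← Real.sqrt_mul (by positivity), show (8 * E₀) * (2 * E₀) = (4 * E₀) ^ 2 by ring,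
          Real.sqrt_sq (by positivity)]
      calc |((starRingEnd ℂ) (f s) * f' s).im| + |((starRingEnd ℂ) (f s) * f' s).re|
          ≤ 2 * (‖f s‖ * ‖f' s‖) := by
            rw [← habs]; linarith
        _ ≤ 2 * ((Real.sqrt (8 * E₀) / c₀) * (Real.sqrt (2 * E₀) * Real.exp (-α * s ^ 2 / 4))) := by
            gcongr
        _ = (Real.sqrt (8 * E₀) * Real.sqrt (2 * E₀)) * (2 * Real.exp (-α * s ^ 2 / 4)) / c₀ := by
            ring
        _ = (8 * E₀ / c₀) * Real.exp (-α * s ^ 2 / 4) := by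
            rw [hsqm]; ring
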